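/- Let m ≥ 0, let Γ' ⊆ V_m, and let x, y ∈ Γ' be distinct. Then c^{Γ'}_{x,y} = 0 if and only if every path x = z_0 ∼_m z_1 ∼_m ⋯ ∼_m z_k = y in the graph Γ_m contains an interior vertex z_i with 0 < i < k and z_i ∈ Γ'. -/

import Mathlib

open scoped BigOperators

noncomputable section

namespace SGPaper

/-- The three corners of the Sierpinski gasket:
`q₀ = (1/2, √3/2)`, `q₁ = (0,0)`, `q₂ = (1,0)`. -/
def q : Fin 3 → ℝ × ℝ
  | 0 => (1 / 2, Real.sqrt 3 / 2)
  | 1 => (0, 0)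
  | 2 => (1, 0)

/-- The contraction map towards corner `i`: `F_i(x) = (x + q_i)/2`. -/
def Fmap (i : Fin 3) (x : ℝ × ℝ) : ℝ × ℝ := (2⁻¹ : ℝ) • (x + q i)

/-- `Fword w = F_{w₁} ∘ ⋯ ∘ F_{w_m}` for the word `w = w₁⋯w_m`. -/
def Fword (w : List (Fin 3)) : ℝ × ℝ → ℝ × ℝ :=
  w.foldr (fun i f => Fmap i ∘ f) id

/-- The level-`m` vertex set of the Sierpinski gasket:
`V_m = ⋃_{|w| = m} F_w({q₀, q₁, q₂})`. -/
def V (m : ℕ) : Set (ℝ × ℝ) :=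
  {x | ∃ w : List (Fin 3), w.length = m ∧ ∃ i : Fin 3, x = Fword w (q i)}

/-- `x` and `y` are `m`-neighbors: they are distinct and belong to a common
level-`m` cell `F_w({q₀, q₁, q₂})`. -/
def Nbr (m : ℕ) (x y : ℝ × ℝ) : Prop :=
  x ≠ y ∧ ∃ w : List (Fin 3), w.length = m ∧
    (∃ i : Fin 3, x = Fword w (q i)) ∧ (∃ j : Fin 3, y = Fword w (q j))

/-- The value `(u x - u y)²` on the unordered pair `{x, y}`. -/
def edgeVal (u : ℝ × ℝ → ℝ) : Sym2 (ℝ × ℝ) → ℝ :=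
  Sym2.lift ⟨fun x y => (u x - u y) ^ 2, fun _ _ => by ring⟩

/-- The unordered pair `e` is an edge of the level-`m` graph `Γ_m`. -/
def IsEdge (m : ℕ) (e : Sym2 (ℝ × ℝ)) : Prop :=
  ∃ x y : ℝ × ℝ, Nbr m x y ∧ e = s(x, y)

/-- The level-`m` graph energy: `E_m(u) = (5/3)^m Σ (u x − u y)²`, the sum being over
unordered `m`-neighbor pairs `{x, y}` (a finite set, so `tsum` is the honest sum). -/
def Energy (m : ℕ) (u : ℝ × ℝ → ℝ) : ℝ :=
  (5 / 3 : ℝ) ^ m * ∑' e : {e : Sym2 (ℝ × ℝ) // IsEdge m e}, edgeVal u e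

/-- `Q_E(v)`: minimal level-`m` energy among functions `u : V_m → ℝ` agreeing
with `v` on `E` (the minimum is attained, so it equals this infimum). -/
def Q (m : ℕ) (E : Set (ℝ × ℝ)) (v : ℝ × ℝ → ℝ) : ℝ :=
  sInf {r | ∃ u : ℝ × ℝ → ℝ, (∀ x ∈ E, u x = v x) ∧ r = Energy m u}

/-- Indicator function of the point `z`. -/
def ind (z : ℝ × ℝ) : ℝ × ℝ → ℝ := fun t => if t = z then 1 else 0

/-- The conductance `c^E_{x,y} = (Q_E(𝟙_x) + Q_E(𝟙_y) − Q_E(𝟙_x + 𝟙_y))/2`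
between `x, y ∈ E`, computed at level `m`. -/
def cond (m : ℕ) (E : Set (ℝ × ℝ)) (x y : ℝ × ℝ) : ℝ :=
  (Q m E (ind x) + Q m E (ind y) - Q m E (ind x + ind y)) / 2

/-! ### Auxiliary development -/

open scoped Classical

lemma Nbr.symm' {m : ℕ} {a b : ℝ × ℝ} (h : Nbr m a b) : Nbr m b a := by
  obtain ⟨hne, w, hl, h1, h2⟩ := h
  exact ⟨hne.symm, w, hl, h2, h1⟩

lemma Nbr.mem_left {m : ℕ} {a b : ℝ × ℝ} (h : Nbr m a b) : a ∈ V m := by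
  obtain ⟨_, w, hl, ⟨i, hi⟩, _⟩ := h
  exact ⟨w, hl, i, hi⟩

lemma Nbr.mem_right {m : ℕ} {a b : ℝ × ℝ} (h : Nbr m a b) : b ∈ V m :=
  h.symm'.mem_left

lemma edgeVal_mk (u : ℝ × ℝ → ℝ) (a b : ℝ × ℝ) :
    edgeVal u s(a, b) = (u a - u b) ^ 2 := rfl

lemma finite_V (m : ℕ) : (V m).Finite := by
  have h : V m ⊆ Set.range
      (fun p : List.Vector (Fin 3) m × Fin 3 => Fword p.1.1 (q p.2)) := by
    rintro x ⟨w, hl, i, rfl⟩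
    exact ⟨(⟨w, hl⟩, i), rfl⟩
  exact (Set.finite_range _).subset h

lemma finite_edges (m : ℕ) : {e : Sym2 (ℝ × ℝ) | IsEdge m e}.Finite := by
  have h : {e : Sym2 (ℝ × ℝ) | IsEdge m e} ⊆
      Set.image2 (fun a b => s(a, b)) (V m) (V m) := by
    rintro e ⟨a, b, hab, rfl⟩
    exact ⟨a, hab.mem_left, b, hab.mem_right, rfl⟩
  exact (Set.Finite.image2 _ (finite_V m) (finite_V m)).subset h

noncomputable instance edgeFintype (m : ℕ) : Fintype {e : Sym2 (ℝ × ℝ) // IsEdge m e} :=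
  (finite_edges m).fintype

/-- chosen first endpoint of an edge -/
def eA {m : ℕ} (e : {e : Sym2 (ℝ × ℝ) // IsEdge m e}) : ℝ × ℝ := e.2.choose

def eB {m : ℕ} (e : {e : Sym2 (ℝ × ℝ) // IsEdge m e}) : ℝ × ℝ :=
  e.2.choose_spec.choose

lemma eNbr {m : ℕ} (e : {e : Sym2 (ℝ × ℝ) // IsEdge m e}) : Nbr m (eA e) (eB e) :=
  e.2.choose_spec.choose_spec.1

lemma eEq {m : ℕ} (e : {e : Sym2 (ℝ × ℝ) // IsEdge m e}) :
    (e : Sym2 (ℝ × ℝ)) = s(eA e, eB e) :=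
  e.2.choose_spec.choose_spec.2

lemma edgeVal_eq {m : ℕ} (u : ℝ × ℝ → ℝ) (e : {e : Sym2 (ℝ × ℝ) // IsEdge m e}) :
    edgeVal u (e : Sym2 (ℝ × ℝ)) = (u (eA e) - u (eB e)) ^ 2 := by
  rw [eEq]; rfl

lemma Energy_eq (m : ℕ) (u : ℝ × ℝ → ℝ) :
    Energy m u = (5 / 3 : ℝ) ^ m *
      ∑ e : {e : Sym2 (ℝ × ℝ) // IsEdge m e}, (u (eA e) - u (eB e)) ^ 2 := by
  rw [Energy, tsum_fintype]
  congr 1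
  exact Finset.sum_congr rfl fun e _ => edgeVal_eq u e

lemma Cpos (m : ℕ) : (0 : ℝ) < (5 / 3 : ℝ) ^ m := by positivity

lemma Energy_nonneg (m : ℕ) (u : ℝ × ℝ → ℝ) : 0 ≤ Energy m u := by
  rw [Energy_eq]
  exact mul_nonneg (Cpos m).le (Finset.sum_nonneg fun e _ => sq_nonneg _)

lemma Energy_mono {m : ℕ} {f g : ℝ × ℝ → ℝ}
    (h : ∀ a b, Nbr m a b → (f a - f b) ^ 2 ≤ (g a - g b) ^ 2) :
    Energy m f ≤ Energy m g := by
  rw [Energy_eq, Energy_eq]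
  exact mul_le_mul_of_nonneg_left
    (Finset.sum_le_sum fun e _ => h _ _ (eNbr e)) (Cpos m).le

lemma Energy_congr {m : ℕ} {f g : ℝ × ℝ → ℝ}
    (h : ∀ a b, Nbr m a b → (f a - f b) ^ 2 = (g a - g b) ^ 2) :
    Energy m f = Energy m g := by
  rw [Energy_eq, Energy_eq]
  congr 1
  exact Finset.sum_congr rfl fun e _ => h _ _ (eNbr e)

/-! ### sInf lemmas for `Q` -/

lemma Qset_nonempty (m : ℕ) (E : Set (ℝ × ℝ)) (v : ℝ × ℝ → ℝ) :
    {r | ∃ u : ℝ × ℝ → ℝ, (∀ x ∈ E, u x = v x) ∧ r = Energy m u}.Nonempty :=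
  ⟨Energy m v, v, fun _ _ => rfl, rfl⟩

lemma Qset_bdd (m : ℕ) (E : Set (ℝ × ℝ)) (v : ℝ × ℝ → ℝ) :
    BddBelow {r | ∃ u : ℝ × ℝ → ℝ, (∀ x ∈ E, u x = v x) ∧ r = Energy m u} := by
  refine ⟨0, ?_⟩
  rintro r ⟨u, -, rfl⟩
  exact Energy_nonneg m u

lemma Q_le_energy {m : ℕ} {E : Set (ℝ × ℝ)} {v u : ℝ × ℝ → ℝ}
    (h : ∀ z ∈ E, u z = v z) : Q m E v ≤ Energy m u :=
  csInf_le (Qset_bdd m E v) ⟨u, h, rfl⟩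

lemma le_Q {m : ℕ} {E : Set (ℝ × ℝ)} {v : ℝ × ℝ → ℝ} {c : ℝ}
    (h : ∀ u : ℝ × ℝ → ℝ, (∀ z ∈ E, u z = v z) → c ≤ Energy m u) :
    c ≤ Q m E v := by
  refine le_csInf (Qset_nonempty m E v) ?_
  rintro r ⟨u, hu, rfl⟩
  exact h u hu

lemma exists_adm_lt {m : ℕ} {E : Set (ℝ × ℝ)} (v : ℝ × ℝ → ℝ) {ε : ℝ} (hε : 0 < ε) :
    ∃ u : ℝ × ℝ → ℝ, (∀ z ∈ E, u z = v z) ∧ Energy m u < Q m E v + ε := by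
  obtain ⟨r, hr, hlt⟩ := Real.lt_sInf_add_pos (Qset_nonempty m E v) hε
  obtain ⟨u, hu, rfl⟩ := hr
  exact ⟨u, hu, hlt⟩

lemma le_of_forall_eps {a b : ℝ} (h : ∀ ε : ℝ, 0 < ε → a ≤ b + ε) : a ≤ b := by
  by_contra hab
  push_neg at hab
  have := h ((a - b) / 2) (by linarith)
  linarith

/-! ### Parallelogram identity -/

lemma energy_parallelogram (m : ℕ) (u v : ℝ × ℝ → ℝ) :
    Energy m (u + v) + Energy m (u - v) = 2 * Energy m u + 2 * Energy m v := by
  simp only [Energy_eq, Pi.add_apply, Pi.sub_apply]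
  rw [← mul_add, ← Finset.sum_add_distrib]
  have key : ∑ e : {e : Sym2 (ℝ × ℝ) // IsEdge m e},
      ((u (eA e) + v (eA e) - (u (eB e) + v (eB e))) ^ 2 +
        (u (eA e) - v (eA e) - (u (eB e) - v (eB e))) ^ 2) =
      ∑ e : {e : Sym2 (ℝ × ℝ) // IsEdge m e},
      (2 * (u (eA e) - u (eB e)) ^ 2 + 2 * (v (eA e) - v (eB e)) ^ 2) :=
    Finset.sum_congr rfl fun e _ => by ring
  rw [key, Finset.sum_add_distrib, ← Finset.mul_sum, ← Finset.mul_sum]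
  ring

lemma two_Q_add (m : ℕ) (E : Set (ℝ × ℝ)) (x y : ℝ × ℝ) :
    2 * (Q m E (ind x) + Q m E (ind y)) =
      Q m E (ind x + ind y) + Q m E (ind x - ind y) := by
  apply le_antisymm
  · apply le_of_forall_eps
    intro ε hε
    obtain ⟨w, hw, hwE⟩ := exists_adm_lt (m := m) (E := E) (ind x + ind y) (half_pos hε)
    obtain ⟨w', hw', hw'E⟩ := exists_adm_lt (m := m) (E := E) (ind x - ind y) (half_pos hε)
    set a : ℝ × ℝ → ℝ := fun t => (w t + w' t) / 2 with ha
    set b : ℝ × ℝ → ℝ := fun t => (w t - w' t) / 2 with hb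
    have hax : ∀ z ∈ E, a z = ind x z := by
      intro z hz
      have h1 := hw z hz
      have h2 := hw' z hz
      simp only [Pi.add_apply, Pi.sub_apply] at h1 h2
      simp only [ha]
      rw [h1, h2]; ring
    have hby : ∀ z ∈ E, b z = ind y z := by
      intro z hz
      have h1 := hw z hz
      have h2 := hw' z hz
      simp only [Pi.add_apply, Pi.sub_apply] at h1 h2
      simp only [hb]
      rw [h1, h2]; ring
    have hsum : Energy m w + Energy m w' = 2 * Energy m a + 2 * Energy m b := by
      have h1 : w = a + b := by funext t; simp only [ha, hb, Pi.add_apply]; ring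
      have h2 : w' = a - b := by funext t; simp only [ha, hb, Pi.sub_apply]; ring
      rw [h1, h2, energy_parallelogram]
    have q1 : Q m E (ind x) ≤ Energy m a := Q_le_energy hax
    have q2 : Q m E (ind y) ≤ Energy m b := Q_le_energy hby
    linarith
  · apply le_of_forall_eps
    intro ε hε
    obtain ⟨u, hu, huE⟩ := exists_adm_lt (m := m) (E := E) (ind x) (by linarith : (0:ℝ) < ε / 4)
    obtain ⟨v, hv, hvE⟩ := exists_adm_lt (m := m) (E := E) (ind y) (by linarith : (0:ℝ) < ε / 4)
    have h1 : ∀ z ∈ E, (u + v) z = (ind x + ind y) z := by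
      intro z hz
      simp only [Pi.add_apply, hu z hz, hv z hz]
    have h2 : ∀ z ∈ E, (u - v) z = (ind x - ind y) z := by
      intro z hz
      simp only [Pi.sub_apply, hu z hz, hv z hz]
    have q1 : Q m E (ind x + ind y) ≤ Energy m (u + v) := Q_le_energy h1
    have q2 : Q m E (ind x - ind y) ≤ Energy m (u - v) := Q_le_energy h2
    have hpar := energy_parallelogram m u v
    linarith

lemma cond_eq (m : ℕ) (E : Set (ℝ × ℝ)) (x y : ℝ × ℝ) :
    cond m E x y = (Q m E (ind x - ind y) - Q m E (ind x + ind y)) / 4 := by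
  have h := two_Q_add m E x y
  rw [cond]
  linarith

/-! ### values of indicators -/

lemma sigma_val_x {x y : ℝ × ℝ} (hxy : x ≠ y) : (ind x + ind y) x = 1 := by
  simp [ind, hxy]

lemma sigma_val_y {x y : ℝ × ℝ} (hxy : x ≠ y) : (ind x + ind y) y = 1 := by
  simp [ind, hxy.symm]

lemma sigma_val_other {x y z : ℝ × ℝ} (hzx : z ≠ x) (hzy : z ≠ y) :
    (ind x + ind y) z = 0 := by
  simp [ind, hzx, hzy]

lemma delta_val_x {x y : ℝ × ℝ} (hxy : x ≠ y) : (ind x - ind y) x = 1 := by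
  simp [ind, hxy]

lemma delta_val_y {x y : ℝ × ℝ} (hxy : x ≠ y) : (ind x - ind y) y = -1 := by
  simp [ind, hxy.symm]

lemma delta_val_other {x y z : ℝ × ℝ} (hzx : z ≠ x) (hzy : z ≠ y) :
    (ind x - ind y) z = 0 := by
  simp [ind, hzx, hzy]

/-! ### Step 2: `Q σ ≤ Q δ` always -/

lemma abs_sq_le (a b : ℝ) : (|a| - |b|) ^ 2 ≤ (a - b) ^ 2 := by
  have h1 : a * b ≤ |a| * |b| := by
    rw [← abs_mul]; exact le_abs_self _
  have h2 : |a| ^ 2 = a ^ 2 := sq_abs a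
  have h3 : |b| ^ 2 = b ^ 2 := sq_abs b
  nlinarith

lemma Qsigma_le_Qdelta (m : ℕ) (E : Set (ℝ × ℝ)) {x y : ℝ × ℝ} (hxy : x ≠ y) :
    Q m E (ind x + ind y) ≤ Q m E (ind x - ind y) := by
  apply le_Q
  intro w hw
  have hadm : ∀ z ∈ E, (fun t => |w t|) z = (ind x + ind y) z := by
    intro z hz
    have := hw z hz
    by_cases hzx : z = x
    · subst hzx
      rw [sigma_val_x hxy]
      simp only [this, delta_val_x hxy, abs_one]
    · by_cases hzy : z = y
      · subst hzy
        rw [sigma_val_y hxy]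
        simp only [this, delta_val_y hxy, abs_neg, abs_one]
      · rw [sigma_val_other hzx hzy]
        simp only [this, delta_val_other hzx hzy, abs_zero]
  calc Q m E (ind x + ind y) ≤ Energy m (fun t => |w t|) := Q_le_energy hadm
    _ ≤ Energy m w := Energy_mono fun a b _ => abs_sq_le (w a) (w b)

/-! ### Step 3: separation implies `Q δ ≤ Q σ` -/

/-- Vertices reachable from `y` by a path whose vertices of positive index avoid `E`. -/
def Reach (m : ℕ) (E : Set (ℝ × ℝ)) (y : ℝ × ℝ) : Set (ℝ × ℝ) :=
  {z | ∃ (k : ℕ) (p : ℕ → ℝ × ℝ), p 0 = y ∧ p k = z ∧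
    (∀ i < k, Nbr m (p i) (p (i + 1))) ∧ ∀ i, 0 < i → i ≤ k → p i ∉ E}

lemma y_mem_Reach (m : ℕ) (E : Set (ℝ × ℝ)) (y : ℝ × ℝ) : y ∈ Reach m E y :=
  ⟨0, fun _ => y, rfl, rfl, fun i hi => absurd hi (Nat.not_lt_zero i),
    fun i h1 h2 => absurd (Nat.lt_of_lt_of_le h1 h2) (lt_irrefl 0)⟩

lemma Reach_extend {m : ℕ} {E : Set (ℝ × ℝ)} {y b a : ℝ × ℝ}
    (hb : b ∈ Reach m E y) (hab : Nbr m b a) (ha : a ∉ E) : a ∈ Reach m E y := by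
  obtain ⟨k, p, h0, hk, hstep, havoid⟩ := hb
  refine ⟨k + 1, fun i => if i ≤ k then p i else a, ?_, ?_, ?_, ?_⟩
  · simp [Nat.zero_le k, h0]
  · simp
  · intro i hi
    show Nbr m (if i ≤ k then p i else a) (if i + 1 ≤ k then p (i + 1) else a)
    by_cases h : i < k
    · rw [if_pos h.le, if_pos (Nat.succ_le_of_lt h)]
      exact hstep i h
    · have h1 : i = k := by omega
      subst h1
      rw [if_pos (le_refl i), if_neg (Nat.not_succ_le_self i), hk]
      exact hab
  · intro i h1 h2
    show (if i ≤ k then p i else a) ∉ E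
    by_cases h : i ≤ k
    · rw [if_pos h]; exact havoid i h1 h
    · rw [if_neg h]; exact ha

lemma x_not_mem_Reach {m : ℕ} {E : Set (ℝ × ℝ)} {x y : ℝ × ℝ}
    (hx : x ∈ E) (hxy : x ≠ y) : x ∉ Reach m E y := by
  rintro ⟨k, p, h0, hk, hstep, havoid⟩
  rcases Nat.eq_zero_or_pos k with h | h
  · subst h; rw [h0] at hk; exact hxy hk.symm
  · exact havoid k h le_rfl (hk ▸ hx)

/-- the separation property -/
def Sep (m : ℕ) (E : Set (ℝ × ℝ)) (x y : ℝ × ℝ) : Prop :=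
  ∀ (k : ℕ) (z : ℕ → ℝ × ℝ), z 0 = x → z k = y →
    (∀ i < k, Nbr m (z i) (z (i + 1))) →
    ∃ i, 0 < i ∧ i < k ∧ z i ∈ E

lemma no_edge_to_x {m : ℕ} {E : Set (ℝ × ℝ)} {x y b : ℝ × ℝ}
    (hsep : Sep m E x y) (hb : b ∈ Reach m E y) (hab : Nbr m b x) : False := by
  obtain ⟨k, p, h0, hk, hstep, havoid⟩ := hb
  have hpath : ∀ i < k + 1, Nbr m ((fun i => if i = 0 then x else p (k + 1 - i)) i)
      ((fun i => if i = 0 then x else p (k + 1 - i)) (i + 1)) := by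
    intro i hi
    by_cases h : i = 0
    · subst h
      simp only [if_pos rfl, if_neg (Nat.one_ne_zero)]
      have : k + 1 - 1 = k := by omega
      rw [this, hk]
      exact hab.symm'
    · simp only [if_neg h, if_neg (Nat.succ_ne_zero i)]
      have h1 : k - i < k := by omega
      have h2 : k + 1 - i = (k - i) + 1 := by omega
      have h3 : k + 1 - (i + 1) = k - i := by omega
      rw [h2, h3]
      exact (hstep (k - i) h1).symm'
  obtain ⟨j, hj0, hjk, hjE⟩ := hsep (k + 1) (fun i => if i = 0 then x else p (k + 1 - i))
    (by simp) (by simp only [if_neg (Nat.succ_ne_zero k)]; simp [h0]) hpath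
  have hj : j ≠ 0 := Nat.pos_iff_ne_zero.mp hj0
  rw [if_neg hj] at hjE
  exact havoid (k + 1 - j) (by omega) (by omega) hjE

lemma sep_Qdelta_le_Qsigma {m : ℕ} {E : Set (ℝ × ℝ)} {x y : ℝ × ℝ}
    (hx : x ∈ E) (hy : y ∈ E) (hxy : x ≠ y) (hsep : Sep m E x y) :
    Q m E (ind x - ind y) ≤ Q m E (ind x + ind y) := by
  apply le_Q
  intro u hu
  set B := Reach m E y with hB
  set w : ℝ × ℝ → ℝ := fun t => if t ∈ B then -u t else u t with hw
  have hxB : x ∉ B := x_not_mem_Reach hx hxy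
  have hadm : ∀ z ∈ E, w z = (ind x - ind y) z := by
    intro z hz
    by_cases hzx : z = x
    · subst hzx
      simp only [hw, if_neg hxB, hu z hz, sigma_val_x hxy, delta_val_x hxy]
    · by_cases hzy : z = y
      · subst hzy
        simp only [hw, if_pos (y_mem_Reach m E z), hu z hz, sigma_val_y hxy,
          delta_val_y hxy]
        exact if_pos (show z ∈ B from y_mem_Reach m E z)
      · simp only [hw]
        rw [delta_val_other hzx hzy]
        by_cases hzB : z ∈ B
        · rw [if_pos hzB, hu z hz, sigma_val_other hzx hzy, neg_zero]
        · rw [if_neg hzB, hu z hz, sigma_val_other hzx hzy]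
  have hval : ∀ a, a ∉ B → a ≠ x → Nbr m a y ∨ True → True := fun _ _ _ _ => trivial
  have hE : Energy m w = Energy m u := by
    apply Energy_congr
    intro a b hab
    by_cases haB : a ∈ B <;> by_cases hbB : b ∈ B
    · simp only [hw, if_pos haB, if_pos hbB]; ring
    · -- a ∈ B, b ∉ B : b ∈ E, b ≠ x, b ≠ y hence u b = 0
      have hbE : b ∈ E := by
        by_contra hbE
        exact hbB (Reach_extend haB hab hbE)
      have hbx : b ≠ x := by
        rintro rfl
        exact no_edge_to_x hsep haB hab
      have hby : b ≠ y := by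
        rintro rfl
        exact hbB (y_mem_Reach m E b)
      have hub : u b = 0 := by rw [hu b hbE, sigma_val_other hbx hby]
      simp only [hw, if_pos haB, if_neg hbB, hub]; ring
    · have haE : a ∈ E := by
        by_contra haE
        exact haB (Reach_extend hbB hab.symm' haE)
      have hax : a ≠ x := by
        rintro rfl
        exact no_edge_to_x hsep hbB hab.symm'
      have hay : a ≠ y := by
        rintro rfl
        exact haB (y_mem_Reach m E a)
      have hua : u a = 0 := by rw [hu a haE, sigma_val_other hax hay]
      simp only [hw, if_neg haB, if_pos hbB, hua]; ring
    · simp only [hw, if_neg haB, if_neg hbB]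
  calc Q m E (ind x - ind y) ≤ Energy m w := Q_le_energy hadm
    _ = Energy m u := hE
    _ ≤ Energy m u := le_rfl

/-! ### Step 4: minimizers -/

noncomputable instance Vfintype (m : ℕ) : Fintype (V m) := (finite_V m).fintype

def Phi (m : ℕ) (p : V m → ℝ) : ℝ × ℝ → ℝ :=
  fun t => if h : t ∈ V m then p ⟨t, h⟩ else 0

lemma Phi_apply (m : ℕ) (p : V m → ℝ) {t : ℝ × ℝ} (h : t ∈ V m) :
    Phi m p t = p ⟨t, h⟩ := dif_pos h

lemma continuous_energyPhi (m : ℕ) : Continuous (fun p : V m → ℝ => Energy m (Phi m p)) := by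
  have h : (fun p : V m → ℝ => Energy m (Phi m p)) = fun p =>
      (5 / 3 : ℝ) ^ m * ∑ e : {e : Sym2 (ℝ × ℝ) // IsEdge m e},
        (p ⟨eA e, (eNbr e).mem_left⟩ - p ⟨eB e, (eNbr e).mem_right⟩) ^ 2 := by
    funext p
    rw [Energy_eq]
    congr 1
    refine Finset.sum_congr rfl fun e _ => ?_
    rw [Phi_apply m p (eNbr e).mem_left, Phi_apply m p (eNbr e).mem_right]
  rw [h]
  fun_prop

def clamp (s : ℝ) : ℝ := max (-1) (min 1 s)

lemma clamp_mem (s : ℝ) : clamp s ∈ Set.Icc (-1 : ℝ) 1 := by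
  constructor
  · exact le_max_left _ _
  · exact max_le (by norm_num) (min_le_left _ _)

lemma clamp_eq {s : ℝ} (h1 : -1 ≤ s) (h2 : s ≤ 1) : clamp s = s := by
  rw [clamp, min_eq_right h2, max_eq_right h1]

lemma clamp_lip (s t : ℝ) : (clamp s - clamp t) ^ 2 ≤ (s - t) ^ 2 := by
  rw [clamp, clamp, max_def, max_def, min_def, min_def]
  split_ifs <;> nlinarith

lemma exists_minimizer (m : ℕ) (E : Set (ℝ × ℝ)) (v : ℝ × ℝ → ℝ)
    (hv : ∀ z ∈ E, -1 ≤ v z ∧ v z ≤ 1) (hE : E ⊆ V m) :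
    ∃ w : ℝ × ℝ → ℝ, (∀ z ∈ E, w z = v z) ∧ (∀ t, -1 ≤ w t ∧ w t ≤ 1) ∧
      Energy m w = Q m E v := by
  set K : Set (V m → ℝ) :=
    {p | (∀ i, p i ∈ Set.Icc (-1 : ℝ) 1) ∧ ∀ i : V m, (i : ℝ × ℝ) ∈ E → p i = v i} with hK
  have hcpt : IsCompact K := by
    have h1 : K = (Set.pi Set.univ fun _ : V m => Set.Icc (-1 : ℝ) 1) ∩
        {p | ∀ i : V m, (i : ℝ × ℝ) ∈ E → p i = v i} := by
      ext p
      simp only [hK, Set.mem_setOf_eq, Set.mem_inter_iff, Set.mem_pi, Set.mem_univ,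
        true_implies]
    rw [h1]
    refine (isCompact_univ_pi fun _ => isCompact_Icc).inter_right ?_
    have h2 : {p : V m → ℝ | ∀ i : V m, (i : ℝ × ℝ) ∈ E → p i = v i} =
        ⋂ i : V m, {p : V m → ℝ | (i : ℝ × ℝ) ∈ E → p i = v i} := by
      ext p; simp [Set.mem_iInter]
    rw [h2]
    refine isClosed_iInter fun i => ?_
    by_cases hi : (i : ℝ × ℝ) ∈ E
    · simp only [hi, true_implies]
      exact isClosed_eq (continuous_apply i) continuous_const
    · simp only [hi, false_implies, Set.setOf_true]
      exact isClosed_univ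
  have hne : K.Nonempty := by
    refine ⟨fun i => if (i : ℝ × ℝ) ∈ E then v i else 0, ?_, ?_⟩
    · intro i
      by_cases hi : (i : ℝ × ℝ) ∈ E
      · simp only [if_pos hi]
        exact ⟨(hv _ hi).1, (hv _ hi).2⟩
      · simp only [if_neg hi]
        norm_num
    · intro i hi
      simp only [if_pos hi]
  obtain ⟨p, hpK, hpmin⟩ := hcpt.exists_isMinOn hne (continuous_energyPhi m).continuousOn
  have hadm : ∀ z ∈ E, Phi m p z = v z := by
    intro z hz
    have hzV : z ∈ V m := hE hz
    rw [Phi_apply m p hzV]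
    exact hpK.2 ⟨z, hzV⟩ hz
  refine ⟨Phi m p, hadm, ?_, ?_⟩
  · intro t
    by_cases ht : t ∈ V m
    · rw [Phi_apply m p ht]
      exact ⟨(hpK.1 ⟨t, ht⟩).1, (hpK.1 ⟨t, ht⟩).2⟩
    · rw [Phi, dif_neg ht]
      norm_num
  · refine le_antisymm ?_ (Q_le_energy hadm)
    apply le_Q
    intro u hu
    set pu : V m → ℝ := fun i => clamp (u i) with hpu
    have hpuK : pu ∈ K := by
      constructor
      · intro i
        exact clamp_mem _
      · intro i hi
        have := hu i hi
        simp only [hpu, this]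
        exact clamp_eq (hv _ hi).1 (hv _ hi).2
    have h1 : Energy m (Phi m p) ≤ Energy m (Phi m pu) :=
      isMinOn_iff.mp hpmin pu hpuK
    have h2 : Energy m (Phi m pu) ≤ Energy m u := by
      apply Energy_mono
      intro a b hab
      rw [Phi_apply m pu hab.mem_left, Phi_apply m pu hab.mem_right]
      exact clamp_lip (u a) (u b)
    exact h1.trans h2

/-! ### Step 4: harmonicity at interior zeros -/

lemma abs_sq_eq_prod {a b : ℝ} (h : (|a| - |b|) ^ 2 = (a - b) ^ 2) : 0 ≤ a * b := by
  have habs : |a| * |b| = a * b := by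
    nlinarith [sq_abs a, sq_abs b]
  rw [← habs]
  positivity

lemma zero_spread (m : ℕ) (E : Set (ℝ × ℝ)) (v u : ℝ × ℝ → ℝ)
    (hadm : ∀ z ∈ E, u z = v z) (hmin : Energy m u = Q m E v)
    (hnn : ∀ t, 0 ≤ u t) {z : ℝ × ℝ} (hz : z ∉ E) (hz0 : u z = 0)
    {b : ℝ × ℝ} (hb : Nbr m z b) : u b = 0 := by
  set C := (5 / 3 : ℝ) ^ m with hC
  set sfun : {e : Sym2 (ℝ × ℝ) // IsEdge m e} → ℝ := fun e =>
    (if eA e = z then u (eB e) else 0) + (if eB e = z then u (eA e) else 0) with hsfun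
  set nfun : {e : Sym2 (ℝ × ℝ) // IsEdge m e} → ℝ := fun e =>
    (if eA e = z then (1 : ℝ) else 0) + (if eB e = z then (1 : ℝ) else 0) with hnfun
  set S := ∑ e : {e : Sym2 (ℝ × ℝ) // IsEdge m e}, sfun e with hSdef
  set N := ∑ e : {e : Sym2 (ℝ × ℝ) // IsEdge m e}, nfun e with hNdef
  have hsnn : ∀ e, 0 ≤ sfun e := by
    intro e
    refine add_nonneg ?_ ?_ <;> (split_ifs with h; exacts [hnn _, le_rfl])
  have hnnn : ∀ e, 0 ≤ nfun e := by
    intro e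
    refine add_nonneg ?_ ?_ <;> (split_ifs with h <;> norm_num)
  have hSnn : 0 ≤ S := Finset.sum_nonneg fun e _ => hsnn e
  have hNnn : 0 ≤ N := Finset.sum_nonneg fun e _ => hnnn e
  have hEt : ∀ t : ℝ, Energy m (fun s => if s = z then t else u s) =
      Energy m u + C * (t ^ 2 * N - 2 * t * S) := by
    intro t
    rw [Energy_eq, Energy_eq]
    have hterm : ∀ e : {e : Sym2 (ℝ × ℝ) // IsEdge m e},
        ((if eA e = z then t else u (eA e)) - (if eB e = z then t else u (eB e))) ^ 2
        = (u (eA e) - u (eB e)) ^ 2 + (t ^ 2 * nfun e - 2 * t * sfun e) := by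
      intro e
      have hne := (eNbr e).1
      by_cases h1 : eA e = z
      · have h2 : eB e ≠ z := fun h => hne (h1.trans h.symm)
        rw [if_pos h1, if_neg h2]
        simp only [hsfun, hnfun, if_pos h1, if_neg h2, h1, hz0, eq_self_iff_true,
          if_true, if_false]
        ring
      · by_cases h2 : eB e = z
        · rw [if_neg h1, if_pos h2]
          simp only [hsfun, hnfun, if_neg h1, if_pos h2, h2, hz0, eq_self_iff_true,
            if_true, if_false]
          ring
        · rw [if_neg h1, if_neg h2]
          simp only [hsfun, hnfun, if_neg h1, if_neg h2]
          ring
    have hsum : ∑ e : {e : Sym2 (ℝ × ℝ) // IsEdge m e},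
        ((if eA e = z then t else u (eA e)) - (if eB e = z then t else u (eB e))) ^ 2
        = (∑ e : {e : Sym2 (ℝ × ℝ) // IsEdge m e}, (u (eA e) - u (eB e)) ^ 2)
          + (t ^ 2 * N - 2 * t * S) := by
      rw [Finset.sum_congr rfl fun e _ => hterm e, Finset.sum_add_distrib,
        Finset.sum_sub_distrib, hSdef, hNdef, ← Finset.mul_sum, ← Finset.mul_sum]
    rw [hsum]
    ring
  have hadm_t : ∀ t : ℝ, ∀ s ∈ E, (fun s => if s = z then t else u s) s = v s := by
    intro t s hs
    have hsz : s ≠ z := fun h => hz (h ▸ hs)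
    simp only [if_neg hsz]
    exact hadm s hs
  have hpert : ∀ t : ℝ, 0 ≤ C * (t ^ 2 * N - 2 * t * S) := by
    intro t
    have h1 : Q m E v ≤ Energy m (fun s => if s = z then t else u s) :=
      Q_le_energy (hadm_t t)
    rw [hEt t] at h1
    rw [← hmin] at h1
    linarith
  have hS0 : S = 0 := by
    by_contra hS
    have hSpos : 0 < S := lt_of_le_of_ne hSnn (Ne.symm hS)
    have hN1 : (0 : ℝ) < N + 1 := by linarith
    set t := S / (N + 1) with htdef
    have ht : 0 < t := div_pos hSpos hN1
    have htS : t * (N + 1) = S := div_mul_cancel₀ S (ne_of_gt hN1)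
    have htN : t * N = S - t := by nlinarith [htS]
    have hneg : t ^ 2 * N - 2 * t * S < 0 := by nlinarith [ht, hSpos, htN]
    have := hpert t
    nlinarith [Cpos m, hneg, this]
  have hsall : ∀ e, sfun e = 0 := by
    intro e
    exact (Finset.sum_eq_zero_iff_of_nonneg fun e _ => hsnn e).mp hS0 e (Finset.mem_univ e)
  set e : {e : Sym2 (ℝ × ℝ) // IsEdge m e} := ⟨s(z, b), z, b, hb, rfl⟩ with hedef
  have heq : s(z, b) = s(eA e, eB e) := eEq e
  rw [Sym2.eq_iff] at heq
  have hse := hsall e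
  have hse2 : (if eA e = z then u (eB e) else 0) + (if eB e = z then u (eA e) else 0) = 0 := hse
  rcases heq with ⟨h1, h2⟩ | ⟨h1, h2⟩
  · rw [if_pos h1.symm, ← h2] at hse2
    have hsec_nn : 0 ≤ (if b = z then u (eA e) else 0) := by
      split_ifs; exacts [hnn _, le_rfl]
    have hb2 : 0 ≤ u b := hnn b
    linarith [hse2, hsec_nn]
  · have hfirst : (if eA e = z then u (eB e) else 0) = 0 := by
      split_ifs with h
      · rw [← h1]; exact hz0
      · rfl
    rw [hfirst, if_pos h1.symm, ← h2] at hse2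
    linarith [hse2]

lemma exists_flip (P : ℕ → Prop) : ∀ k, P 0 → ¬ P k → ∃ i, i < k ∧ P i ∧ ¬ P (i + 1) := by
  intro k
  induction k with
  | zero => intro h0 hk; exact absurd h0 hk
  | succ n ih =>
    intro h0 hk
    by_cases hn : P n
    · exact ⟨n, Nat.lt_succ_self n, hn, hk⟩
    · obtain ⟨i, hi, h1, h2⟩ := ih h0 hn
      exact ⟨i, Nat.lt_succ_of_lt hi, h1, h2⟩

lemma not_sep_lt (m : ℕ) (Γ' : Set (ℝ × ℝ)) (hΓ : Γ' ⊆ V m) (x y : ℝ × ℝ)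
    (hx : x ∈ Γ') (hy : y ∈ Γ') (hxy : x ≠ y) (hnsep : ¬ Sep m Γ' x y) :
    Q m Γ' (ind x + ind y) < Q m Γ' (ind x - ind y) := by
  rw [Sep] at hnsep
  push_neg at hnsep
  obtain ⟨k, z, h0, hk, hstep, hint⟩ := hnsep
  have hδbound : ∀ t ∈ Γ', -1 ≤ (ind x - ind y) t ∧ (ind x - ind y) t ≤ 1 := by
    intro t _
    constructor <;> (simp only [Pi.sub_apply, ind]; split_ifs <;> norm_num)
  obtain ⟨w, hwadm, hwbd, hwmin⟩ := exists_minimizer m Γ' (ind x - ind y) hδbound hΓ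
  by_contra hcon
  push_neg at hcon
  have hQeq : Q m Γ' (ind x + ind y) = Q m Γ' (ind x - ind y) :=
    le_antisymm (Qsigma_le_Qdelta m Γ' hxy) hcon
  set u : ℝ × ℝ → ℝ := fun t => |w t| with hu
  have huadm : ∀ t ∈ Γ', u t = (ind x + ind y) t := by
    intro t ht
    have hwt := hwadm t ht
    by_cases h1 : t = x
    · subst h1
      simp only [hu, hwt, delta_val_x hxy, sigma_val_x hxy, abs_one]
    · by_cases h2 : t = y
      · subst h2
        simp only [hu, hwt, delta_val_y hxy, sigma_val_y hxy, abs_neg, abs_one]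
      · simp only [hu, hwt, delta_val_other h1 h2, sigma_val_other h1 h2, abs_zero]
  have hule : Energy m u ≤ Energy m w := Energy_mono fun a b _ => abs_sq_le (w a) (w b)
  have huge : Q m Γ' (ind x + ind y) ≤ Energy m u := Q_le_energy huadm
  have huE : Energy m u = Energy m w := by
    refine le_antisymm hule ?_
    rw [hwmin, ← hQeq]
    exact huge
  have humin : Energy m u = Q m Γ' (ind x + ind y) := by
    rw [huE, hwmin, hQeq]
  have hprod : ∀ a b, Nbr m a b → 0 ≤ w a * w b := by
    have hsum : ∑ e : {e : Sym2 (ℝ × ℝ) // IsEdge m e}, (u (eA e) - u (eB e)) ^ 2 =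
        ∑ e : {e : Sym2 (ℝ × ℝ) // IsEdge m e}, (w (eA e) - w (eB e)) ^ 2 := by
      have h := huE
      rw [Energy_eq, Energy_eq] at h
      exact mul_left_cancel₀ (ne_of_gt (Cpos m)) h
    have hterm : ∀ e : {e : Sym2 (ℝ × ℝ) // IsEdge m e},
        (u (eA e) - u (eB e)) ^ 2 = (w (eA e) - w (eB e)) ^ 2 := by
      intro e
      exact (Finset.sum_eq_sum_iff_of_le fun e _ => abs_sq_le (w (eA e)) (w (eB e))).mp
        hsum e (Finset.mem_univ e)
    intro a b hab
    set e : {e : Sym2 (ℝ × ℝ) // IsEdge m e} := ⟨s(a, b), a, b, hab, rfl⟩ with hedef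
    have h := hterm e
    have heq : s(a, b) = s(eA e, eB e) := eEq e
    rw [Sym2.eq_iff] at heq
    rcases heq with ⟨h1, h2⟩ | ⟨h1, h2⟩
    · rw [← h1, ← h2] at h
      exact abs_sq_eq_prod h
    · rw [← h1, ← h2] at h
      rw [mul_comm]
      exact abs_sq_eq_prod h
  have hwx : w x = 1 := by rw [hwadm x hx, delta_val_x hxy]
  have hwy : w y = -1 := by rw [hwadm y hy, delta_val_y hxy]
  obtain ⟨i, hik, hPi, hPi1⟩ := exists_flip (fun i => 0 < w (z i)) k
    (by show (0:ℝ) < w (z 0); rw [h0, hwx]; norm_num)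
    (by show ¬ (0:ℝ) < w (z k); rw [hk, hwy]; norm_num)
  have hw1 : w (z (i + 1)) ≤ 0 := not_lt.mp hPi1
  have hprod_i := hprod _ _ (hstep i hik)
  have hwzero : w (z (i + 1)) = 0 := by nlinarith [hPi, hw1, hprod_i]
  have hi1k : i + 1 < k := by
    rcases Nat.lt_or_ge (i + 1) k with h | h
    · exact h
    · exfalso
      have : i + 1 = k := by omega
      rw [this, hk, hwy] at hwzero
      norm_num at hwzero
  have hprop : ∀ d, d ≤ i + 1 → u (z (i + 1 - d)) = 0 := by
    intro d
    induction d with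
    | zero =>
      intro _
      show |w (z (i + 1 - 0))| = 0
      simp only [Nat.sub_zero, hwzero, abs_zero]
    | succ n ih =>
      intro hd
      have hn : n ≤ i + 1 := by omega
      have hzn := ih hn
      have hj1 : 1 ≤ i + 1 - n := by omega
      have hjk : i + 1 - n < k := by omega
      have hjΓ : z (i + 1 - n) ∉ Γ' := hint (i + 1 - n) (by omega) hjk
      have hnbr : Nbr m (z (i + 1 - n)) (z (i + 1 - n - 1)) := by
        have hh := hstep (i + 1 - n - 1) (by omega)
        have hjj : i + 1 - n - 1 + 1 = i + 1 - n := by omega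
        rw [hjj] at hh
        exact hh.symm'
      have hres := zero_spread m Γ' (ind x + ind y) u huadm humin
        (fun t => abs_nonneg _) hjΓ hzn hnbr
      have harith : i + 1 - (n + 1) = i + 1 - n - 1 := by omega
      rw [harith]
      exact hres
  have hfin := hprop (i + 1) le_rfl
  rw [Nat.sub_self, h0] at hfin
  have hux : u x = 1 := by
    show |w x| = 1
    rw [hwx, abs_one]
  rw [hux] at hfin
  norm_num at hfin

/-- For `Γ' ⊆ V_m` and distinct `x, y ∈ Γ'`, the conductance
`c^{Γ'}_{x,y}` vanishes iff every path from `x` to `y` in the graph `Γ_m` contains an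
interior vertex lying in `Γ'`. -/
theorem stmt3 (m : ℕ) (Γ' : Set (ℝ × ℝ)) (hΓ : Γ' ⊆ V m)
    (x y : ℝ × ℝ) (hx : x ∈ Γ') (hy : y ∈ Γ') (hxy : x ≠ y) :
    cond m Γ' x y = 0 ↔
      ∀ (k : ℕ) (z : ℕ → ℝ × ℝ), z 0 = x → z k = y →
        (∀ i < k, Nbr m (z i) (z (i + 1))) →
        ∃ i, 0 < i ∧ i < k ∧ z i ∈ Γ' := by
  have hformula := cond_eq m Γ' x y
  constructor
  · intro h0
    by_contra hno
    have hnsep : ¬ Sep m Γ' x y := hno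
    have hlt := not_sep_lt m Γ' hΓ x y hx hy hxy hnsep
    rw [hformula] at h0
    linarith
  · intro hsep
    have h1 : Q m Γ' (ind x - ind y) ≤ Q m Γ' (ind x + ind y) :=
      sep_Qdelta_le_Qsigma hx hy hxy hsep
    have h2 := Qsigma_le_Qdelta m Γ' hxy
    rw [hformula]
    linarith

end SGPaper
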